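/- Set M = D(I_I − P^D_ℛ), where I_I is the I×I identity matrix. Then the K×K matrix EᵀME is invertible, the L×L matrix ZᵀMZ − ZᵀME(EᵀME)⁻¹EᵀMZ is invertible, and its inverse equals Z°⁻ Cᵀ P^D_ℋ D⁻¹ C Z°⁻ᵀ; i.e. the asymptotic covariance matrix of the odds-ratio parameter estimator can be written in terms of the row-multinomial covariance matrix M as Σ_θ̂ = [ZᵀMZ − ZᵀME(EᵀME)⁻¹EᵀMZ]⁻¹. -/

import Mathlib

open Matrix BigOperators

noncomputable section

/-- Cells `(j,k)` of a `(J+1) × (K+1)` contingency table. -/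
abbrev Cell (J K : ℕ) := Fin (J + 1) × Fin (K + 1)

/-- Standard unit vector `e_{jk}` in `ℝ^I`. -/
def eV {J K : ℕ} (c : Cell J K) : Cell J K → ℝ := Pi.single c 1

/-- Row-sum vector `e_{j+} = Σ_k e_{jk}`. -/
def eRow {J K : ℕ} (j : Fin (J + 1)) : Cell J K → ℝ := ∑ k : Fin (K + 1), eV (j, k)

/-- Column-sum vector `e_{+k} = Σ_j e_{jk}`. -/
def eCol {J K : ℕ} (k : Fin (K + 1)) : Cell J K → ℝ := ∑ j : Fin (J + 1), eV (j, k)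

/-- The all-ones vector `e_{++}`. -/
def eAll (J K : ℕ) : Cell J K → ℝ := ∑ j : Fin (J + 1), ∑ k : Fin (K + 1), eV (j, k)

/-- The row space `ℛ = span{e_{0+},…,e_{J+}}`. -/
def rowSpace (J K : ℕ) : Submodule ℝ (Cell J K → ℝ) :=
  Submodule.span ℝ (Set.range (eRow (J := J) (K := K)))

/-- The column space `𝒞 = span{e_{+0},…,e_{+K}}`. -/
def colSpace (J K : ℕ) : Submodule ℝ (Cell J K → ℝ) :=
  Submodule.span ℝ (Set.range (eCol (J := J) (K := K)))

/-- The diagonal space `𝒟 = span{e_{++}}`. -/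
def diagSpace (J K : ℕ) : Submodule ℝ (Cell J K → ℝ) :=
  Submodule.span ℝ {eAll J K}

/-- The marginal space `𝒯 = ℛ + 𝒞`. -/
def margSpace (J K : ℕ) : Submodule ℝ (Cell J K → ℝ) := rowSpace J K ⊔ colSpace J K

/-- `P` is the `D`-orthogonal projection matrix onto the subspace `S`:
`P x ∈ S` and `x - P x` is `D`-orthogonal to `S`, for every `x`. -/
def IsProjD {J K : ℕ} (D : Matrix (Cell J K) (Cell J K) ℝ) (S : Submodule ℝ (Cell J K → ℝ))
    (P : Matrix (Cell J K) (Cell J K) ℝ) : Prop :=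
  ∀ x, P.mulVec x ∈ S ∧ ∀ s ∈ S, (x - P.mulVec x) ⬝ᵥ D.mulVec s = 0

/-- The `D`-orthogonal complement of a subspace `S`. -/
def perpD {J K : ℕ} (D : Matrix (Cell J K) (Cell J K) ℝ) (S : Submodule ℝ (Cell J K → ℝ)) :
    Submodule ℝ (Cell J K → ℝ) where
  carrier := {x | ∀ t ∈ S, x ⬝ᵥ D.mulVec t = 0}
  add_mem' := by
    intro a b ha hb t ht
    simp only [Set.mem_setOf_eq] at *
    simp [add_dotProduct, ha t ht, hb t ht]
  zero_mem' := by
    intro t ht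
    simp
  smul_mem' := by
    intro c a ha t ht
    simp only [Set.mem_setOf_eq] at *
    simp [smul_dotProduct, ha t ht]

/-- The vector `c_{jk} = e_{jk} + e_{00} - e_{j0} - e_{0k}` (for `1 ≤ j`, `1 ≤ k`). -/
def cVec {J K : ℕ} (j : Fin J) (k : Fin K) : Cell J K → ℝ :=
  eV (j.succ, k.succ) + eV (0, 0) - eV (j.succ, 0) - eV (0, k.succ)

/-- The `I × (JK)` matrix `C` with columns `c_{jk}`. -/
def Cmat (J K : ℕ) : Matrix (Cell J K) (Fin J × Fin K) ℝ :=
  fun i jk => cVec jk.1 jk.2 i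

/-- The vector `b_k = e_{0k} - e_{00}` (for `1 ≤ k`). -/
def bVec {J K : ℕ} (k : Fin K) : Cell J K → ℝ :=
  eV ((0 : Fin (J + 1)), k.succ) - eV (0, 0)

/-- The `I × K` matrix `B` with columns `b_k`. -/
def Bmat (J K : ℕ) : Matrix (Cell J K) (Fin K) ℝ :=
  fun i k => bVec k i

/-- The `I × K` matrix `E` with columns `e_{+1},…,e_{+K}`. -/
def Emat (J K : ℕ) : Matrix (Cell J K) (Fin K) ℝ :=
  fun i k => eCol k.succ i

/-- Column space of a matrix. -/
def colSpan {m n : Type*} [Fintype n] (A : Matrix m n ℝ) : Submodule ℝ (m → ℝ) :=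
  Submodule.span ℝ (Set.range fun j => fun i => A i j)

/-- The reduced `(JK) × L` covariate matrix `Z°` with rows `z_{jk}ᵀ`, `j,k ≥ 1`. -/
def Zred {J K : ℕ} {L : Type*} (Z : Matrix (Cell J K) L ℝ) : Matrix (Fin J × Fin K) L ℝ :=
  fun jk => Z (jk.1.succ, jk.2.succ)

/-- The model space `ℋ = 𝒯 + col(Z)` of the log-linear model
`η_{jk} = α + ρ_j + γ_k + z_{jk}ᵀ θ`. -/
def modelSpace {J K : ℕ} {L : Type*} [Fintype L] (Z : Matrix (Cell J K) L ℝ) :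
    Submodule ℝ (Cell J K → ℝ) :=
  margSpace J K ⊔ colSpan Z

end
section Helpers

open Matrix

variable {J K : ℕ}

lemma ext_mulVec {m n : Type*} [Fintype n] [DecidableEq n] {A B : Matrix m n ℝ}
    (h : ∀ x, A *ᵥ x = B *ᵥ x) : A = B := by
  ext i j
  have := congrFun (h (Pi.single j 1)) i
  simpa [Matrix.mulVec_single] using this

lemma ext_bilin {m n : Type*} [Fintype m] [Fintype n] [DecidableEq m] [DecidableEq n]
    {A B : Matrix m n ℝ} (h : ∀ x y, x ⬝ᵥ A *ᵥ y = x ⬝ᵥ B *ᵥ y) : A = B := by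
  ext i j
  have := h (Pi.single i 1) (Pi.single j 1)
  simpa [Matrix.mulVec_single, single_dotProduct] using this

lemma dot_symm {n : Type*} [Fintype n] {A : Matrix n n ℝ} (hA : Aᵀ = A) (x y : n → ℝ) :
    x ⬝ᵥ A *ᵥ y = y ⬝ᵥ A *ᵥ x := by
  rw [Matrix.dotProduct_mulVec, ← Matrix.mulVec_transpose, hA, dotProduct_comm]

lemma dot_conj {n p : Type*} [Fintype n] [Fintype p] (A : Matrix n p ℝ)
    (B : Matrix n n ℝ) (x y : p → ℝ) :
    x ⬝ᵥ (Aᵀ * B * A) *ᵥ y = (A *ᵥ x) ⬝ᵥ B *ᵥ (A *ᵥ y) := by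
  rw [← Matrix.mulVec_mulVec, ← Matrix.mulVec_mulVec, Matrix.dotProduct_mulVec,
    Matrix.vecMul_transpose]

lemma diag_dot_zero {μ : Cell J K → ℝ} (hμ : ∀ i, 0 < μ i) {v : Cell J K → ℝ}
    (h : v ⬝ᵥ (Matrix.diagonal μ) *ᵥ v = 0) : v = 0 := by
  have hterm : ∀ i : Cell J K, v i * ((Matrix.diagonal μ *ᵥ v) i) = μ i * v i ^ 2 := by
    intro i; rw [Matrix.mulVec_diagonal]; ring
  have hnn : ∀ i ∈ Finset.univ (α := Cell J K), 0 ≤ v i * ((Matrix.diagonal μ *ᵥ v) i) := by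
    intro i _; rw [hterm]; exact mul_nonneg (hμ i).le (sq_nonneg _)
  have h0 : ∀ i ∈ Finset.univ (α := Cell J K), v i * ((Matrix.diagonal μ *ᵥ v) i) = 0 :=
    (Finset.sum_eq_zero_iff_of_nonneg hnn).mp h
  funext i
  have := h0 i (Finset.mem_univ i)
  rw [hterm] at this
  have h2 : v i ^ 2 = 0 := by
    rcases mul_eq_zero.mp this with h' | h'
    · exact absurd h' (hμ i).ne'
    · exact h'
  simpa using sq_eq_zero_iff.mp h2

lemma dinv_dot {μ : Cell J K → ℝ} (hμ : ∀ i, 0 < μ i) (y s : Cell J K → ℝ) :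
    ((Matrix.diagonal fun i => (μ i)⁻¹) *ᵥ y) ⬝ᵥ (Matrix.diagonal μ) *ᵥ s = y ⬝ᵥ s := by
  unfold dotProduct
  apply Finset.sum_congr rfl
  intro i _
  rw [Matrix.mulVec_diagonal, Matrix.mulVec_diagonal]
  field_simp
  rw [div_eq_iff (hμ i).ne']
  ring

lemma projD_fix {μ : Cell J K → ℝ} (hμ : ∀ i, 0 < μ i) {S : Submodule ℝ (Cell J K → ℝ)}
    {P : Matrix (Cell J K) (Cell J K) ℝ} (hP : IsProjD (Matrix.diagonal μ) S P)
    {s : Cell J K → ℝ} (hs : s ∈ S) : P *ᵥ s = s := by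
  have hv : s - P *ᵥ s ∈ S := sub_mem hs (hP s).1
  have h0 := (hP s).2 _ hv
  have := diag_dot_zero hμ h0
  have := sub_eq_zero.mp this
  exact this.symm

lemma projD_unique {μ : Cell J K → ℝ} (hμ : ∀ i, 0 < μ i) {S : Submodule ℝ (Cell J K → ℝ)}
    {P Q : Matrix (Cell J K) (Cell J K) ℝ} (hP : IsProjD (Matrix.diagonal μ) S P)
    (hQ : IsProjD (Matrix.diagonal μ) S Q) : P = Q := by
  apply ext_mulVec
  intro x
  have hv : P *ᵥ x - Q *ᵥ x ∈ S := sub_mem (hP x).1 (hQ x).1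
  have h1 := (hP x).2 _ hv
  have h2 := (hQ x).2 _ hv
  have h3 : (P *ᵥ x - Q *ᵥ x) ⬝ᵥ (Matrix.diagonal μ) *ᵥ (P *ᵥ x - Q *ᵥ x) = 0 := by
    have hsub : (P *ᵥ x - Q *ᵥ x) ⬝ᵥ (Matrix.diagonal μ) *ᵥ (P *ᵥ x - Q *ᵥ x) =
        (x - Q *ᵥ x) ⬝ᵥ (Matrix.diagonal μ) *ᵥ (P *ᵥ x - Q *ᵥ x) -
        (x - P *ᵥ x) ⬝ᵥ (Matrix.diagonal μ) *ᵥ (P *ᵥ x - Q *ᵥ x) := by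
      rw [← sub_dotProduct]
      congr 1
      abel
    rw [hsub, h1, h2, sub_zero]
  exact sub_eq_zero.mp (diag_dot_zero hμ h3)

lemma projD_symm {μ : Cell J K → ℝ} (hμ : ∀ i, 0 < μ i) {S : Submodule ℝ (Cell J K → ℝ)}
    {P : Matrix (Cell J K) (Cell J K) ℝ} (hP : IsProjD (Matrix.diagonal μ) S P) :
    Pᵀ * Matrix.diagonal μ = Matrix.diagonal μ * P := by
  apply ext_bilin
  intro x y
  have hD : (Matrix.diagonal μ)ᵀ = Matrix.diagonal μ := Matrix.diagonal_transpose μ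
  have lhs : x ⬝ᵥ (Pᵀ * Matrix.diagonal μ) *ᵥ y = (P *ᵥ x) ⬝ᵥ (Matrix.diagonal μ) *ᵥ y := by
    rw [← Matrix.mulVec_mulVec, Matrix.dotProduct_mulVec x, Matrix.vecMul_transpose]
  have rhs : x ⬝ᵥ (Matrix.diagonal μ * P) *ᵥ y = x ⬝ᵥ (Matrix.diagonal μ) *ᵥ (P *ᵥ y) := by
    rw [← Matrix.mulVec_mulVec]
  rw [lhs, rhs]
  have o1 : (x - P *ᵥ x) ⬝ᵥ (Matrix.diagonal μ) *ᵥ (P *ᵥ y) = 0 := (hP x).2 _ (hP y).1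
  have o2 : (y - P *ᵥ y) ⬝ᵥ (Matrix.diagonal μ) *ᵥ (P *ᵥ x) = 0 := (hP y).2 _ (hP x).1
  rw [sub_dotProduct, sub_eq_zero] at o1 o2
  rw [o1, dot_symm hD, o2, dot_symm hD]

lemma projD_idem {μ : Cell J K → ℝ} (hμ : ∀ i, 0 < μ i) {S : Submodule ℝ (Cell J K → ℝ)}
    {P : Matrix (Cell J K) (Cell J K) ℝ} (hP : IsProjD (Matrix.diagonal μ) S P) :
    P * P = P := by
  apply ext_mulVec
  intro x
  rw [← Matrix.mulVec_mulVec]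
  exact projD_fix hμ hP (hP x).1

lemma eV_apply (c p : Cell J K) : eV c p = if p = c then 1 else 0 := by
  simp [eV, Pi.single_apply]

lemma eRow_apply (j : Fin (J + 1)) (p : Cell J K) :
    eRow j p = if p.1 = j then 1 else 0 := by
  classical
  simp only [eRow, Finset.sum_apply, eV_apply, Prod.ext_iff, ite_and]
  by_cases h : p.1 = j
  · simp [h]
  · simp [h]

lemma eCol_apply (k : Fin (K + 1)) (p : Cell J K) :
    eCol (J := J) k p = if p.2 = k then 1 else 0 := by
  classical
  simp only [eCol, Finset.sum_apply, eV_apply, Prod.ext_iff, ite_and]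
  by_cases h : p.2 = k
  · simp [h]
  · simp [h]

lemma mem_rowSpace_repr {x : Cell J K → ℝ} (hx : x ∈ rowSpace J K) :
    ∃ r : Fin (J + 1) → ℝ, ∀ p : Cell J K, x p = r p.1 := by
  rw [rowSpace, Submodule.mem_span_range_iff_exists_fun] at hx
  obtain ⟨r, hr⟩ := hx
  refine ⟨r, fun p => ?_⟩
  rw [← hr]
  simp [Finset.sum_apply, eRow_apply, mul_ite]

lemma mem_colSpace_repr {x : Cell J K → ℝ} (hx : x ∈ colSpace J K) :
    ∃ c : Fin (K + 1) → ℝ, ∀ p : Cell J K, x p = c p.2 := by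
  rw [colSpace, Submodule.mem_span_range_iff_exists_fun] at hx
  obtain ⟨c, hc⟩ := hx
  refine ⟨c, fun p => ?_⟩
  rw [← hc]
  simp [Finset.sum_apply, eCol_apply, mul_ite]

lemma row_mem (r : Fin (J + 1) → ℝ) : (fun p : Cell J K => r p.1) ∈ rowSpace J K := by
  rw [rowSpace, Submodule.mem_span_range_iff_exists_fun]
  refine ⟨r, funext fun p => ?_⟩
  simp [Finset.sum_apply, eRow_apply, mul_ite]

lemma mem_margSpace_repr {x : Cell J K → ℝ} (hx : x ∈ margSpace J K) :
    ∃ (r : Fin (J + 1) → ℝ) (c : Fin (K + 1) → ℝ), ∀ p : Cell J K, x p = r p.1 + c p.2 := by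
  rw [margSpace, Submodule.mem_sup] at hx
  obtain ⟨u, hu, v, hv, huv⟩ := hx
  obtain ⟨r, hr⟩ := mem_rowSpace_repr hu
  obtain ⟨c, hc⟩ := mem_colSpace_repr hv
  exact ⟨r, c, fun p => by rw [← huv]; simp [hr p, hc p]⟩

lemma Emul_col_zero (a : Fin K → ℝ) (j : Fin (J + 1)) :
    (Emat J K *ᵥ a) (j, 0) = 0 := by
  unfold Matrix.mulVec dotProduct Emat
  apply Finset.sum_eq_zero
  intro k _
  show eCol k.succ (j, 0) * a k = 0
  rw [eCol_apply, if_neg (fun h => Fin.succ_ne_zero k h.symm), zero_mul]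

lemma Emul_col_succ (a : Fin K → ℝ) (j : Fin (J + 1)) (k : Fin K) :
    (Emat J K *ᵥ a) (j, k.succ) = a k := by
  unfold Matrix.mulVec dotProduct Emat
  simp only [eCol_apply, Fin.succ_inj]
  simp [ite_mul, Finset.sum_ite_eq]

lemma Emul_mem_colSpace (a : Fin K → ℝ) : Emat J K *ᵥ a ∈ colSpace J K := by
  have : Emat J K *ᵥ a = ∑ k : Fin K, a k • eCol k.succ := by
    funext i
    simp [Matrix.mulVec, dotProduct, Emat, Finset.sum_apply, mul_comm]
  rw [this]
  exact Submodule.sum_mem _ fun k _ =>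
    Submodule.smul_mem _ _ (Submodule.subset_span ⟨k.succ, rfl⟩)

lemma marg_decomp {t : Cell J K → ℝ} (ht : t ∈ margSpace J K) :
    ∃ (rv : Cell J K → ℝ) (a : Fin K → ℝ), rv ∈ rowSpace J K ∧ t = rv + Emat J K *ᵥ a := by
  obtain ⟨r, c, hrc⟩ := mem_margSpace_repr ht
  refine ⟨fun p => r p.1 + c 0, fun k => c k.succ - c 0, ?_, ?_⟩
  · exact row_mem fun j => r j + c 0
  funext p
  obtain ⟨j, k⟩ := p
  induction k using Fin.cases with
  | zero => simp [hrc (j, 0), Emul_col_zero]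
  | succ k =>
    simp only [hrc (j, k.succ), Pi.add_apply, Emul_col_succ]
    ring

lemma mem_colSpan_iff {m n : Type*} [Fintype n] {A : Matrix m n ℝ} {x : m → ℝ} :
    x ∈ colSpan A ↔ ∃ b, A *ᵥ b = x := by
  rw [colSpan, Submodule.mem_span_range_iff_exists_fun]
  constructor
  · rintro ⟨b, hb⟩
    refine ⟨b, ?_⟩
    rw [← hb]
    funext i
    simp [Matrix.mulVec, dotProduct, Finset.sum_apply, mul_comm]
  · rintro ⟨b, hb⟩
    refine ⟨b, ?_⟩
    rw [← hb]
    funext i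
    simp [Matrix.mulVec, dotProduct, Finset.sum_apply, mul_comm]

lemma cVec_dot (j : Fin J) (k : Fin K) (t : Cell J K → ℝ) :
    cVec j k ⬝ᵥ t = t (j.succ, k.succ) + t (0, 0) - t (j.succ, 0) - t (0, k.succ) := by
  simp [cVec, eV, add_dotProduct, sub_dotProduct, single_dotProduct]

lemma Ct_mulVec (t : Cell J K → ℝ) (jk : Fin J × Fin K) :
    ((Cmat J K)ᵀ *ᵥ t) jk = cVec jk.1 jk.2 ⬝ᵥ t := rfl

lemma Ct_marg {t : Cell J K → ℝ} (ht : t ∈ margSpace J K) :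
    (Cmat J K)ᵀ *ᵥ t = 0 := by
  obtain ⟨r, c, hrc⟩ := mem_margSpace_repr ht
  funext jk
  rw [Ct_mulVec, cVec_dot, hrc, hrc, hrc, hrc]
  simp only [Pi.zero_apply]
  ring

end Helpers

section MoreHelpers

open Matrix

variable {J K : ℕ}

lemma isUnit_of_mulVec_ker {n : Type*} [Fintype n] [DecidableEq n] {A : Matrix n n ℝ}
    (h : ∀ a, A *ᵥ a = 0 → a = 0) : IsUnit A := by
  rw [← Matrix.mulVec_injective_iff_isUnit]
  intro a b hab
  have h0 : A *ᵥ (a - b) = 0 := by rw [Matrix.mulVec_sub, hab, sub_self]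
  exact sub_eq_zero.mp (h _ h0)

lemma projD_quad {μ : Cell J K → ℝ} (hμ : ∀ i, 0 < μ i) {S : Submodule ℝ (Cell J K → ℝ)}
    {P : Matrix (Cell J K) (Cell J K) ℝ} (hP : IsProjD (Matrix.diagonal μ) S P)
    {x : Cell J K → ℝ} (hx : x ⬝ᵥ (Matrix.diagonal μ) *ᵥ (x - P *ᵥ x) = 0) : x ∈ S := by
  have hD : (Matrix.diagonal μ)ᵀ = Matrix.diagonal μ := Matrix.diagonal_transpose μ
  have hsplit : x ⬝ᵥ (Matrix.diagonal μ) *ᵥ (x - P *ᵥ x)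
      = (x - P *ᵥ x) ⬝ᵥ (Matrix.diagonal μ) *ᵥ (x - P *ᵥ x)
        + (P *ᵥ x) ⬝ᵥ (Matrix.diagonal μ) *ᵥ (x - P *ᵥ x) := by
    rw [← add_dotProduct]
    congr 1
    abel
  have horth : (P *ᵥ x) ⬝ᵥ (Matrix.diagonal μ) *ᵥ (x - P *ᵥ x) = 0 := by
    rw [dot_symm hD]
    exact (hP x).2 _ (hP x).1
  rw [hsplit, horth, add_zero] at hx
  have h0 := sub_eq_zero.mp (diag_dot_zero hμ hx)
  rw [h0]
  exact (hP x).1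

lemma Emul_rowSpace_eq_zero {a : Fin K → ℝ} (h : Emat J K *ᵥ a ∈ rowSpace J K) : a = 0 := by
  obtain ⟨r, hr⟩ := mem_rowSpace_repr h
  funext k
  have h2 := hr ((0 : Fin (J + 1)), k.succ)
  rw [Emul_col_succ] at h2
  have h3 := hr ((0 : Fin (J + 1)), (0 : Fin (K + 1)))
  rw [Emul_col_zero] at h3
  rw [Pi.zero_apply, h2, ← h3]

end MoreHelpers

set_option maxHeartbeats 2000000 in
/-- with `M = D(I − P^D_ℛ)` the row-multinomial covariance matrix,
`EᵀME` and `ZᵀMZ − ZᵀME(EᵀME)⁻¹EᵀMZ` are invertible and the latter's inverse is the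
asymptotic covariance matrix `Σ_θ̂ = Z°⁻ Cᵀ P^D_ℋ D⁻¹ C Z°⁻ᵀ`. -/
theorem covariance_via_row_multinomial_covariance
    {J K L : ℕ} (hJ : 1 ≤ J) (hK : 1 ≤ K) (hL : 1 ≤ L)
    (μ : Cell J K → ℝ) (hμ : ∀ i, 0 < μ i)
    (Z : Matrix (Cell J K) (Fin L) ℝ)
    (hZrow : ∀ j, Z (j, 0) = 0) (hZcol : ∀ k, Z (0, k) = 0)
    (hZrank : (Zred Z).rank = L)
    (PH : Matrix (Cell J K) (Cell J K) ℝ)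
    (hPH : IsProjD (Matrix.diagonal μ) (modelSpace Z) PH)
    (PR : Matrix (Cell J K) (Cell J K) ℝ)
    (hPR : IsProjD (Matrix.diagonal μ) (rowSpace J K) PR)
    (M : Matrix (Cell J K) (Cell J K) ℝ)
    (hM : M = Matrix.diagonal μ * (1 - PR)) :
    IsUnit ((Emat J K)ᵀ * M * Emat J K) ∧
    IsUnit (Zᵀ * M * Z -
      Zᵀ * M * Emat J K * ((Emat J K)ᵀ * M * Emat J K)⁻¹ * (Emat J K)ᵀ * M * Z) ∧
    (Zᵀ * M * Z -
        Zᵀ * M * Emat J K * ((Emat J K)ᵀ * M * Emat J K)⁻¹ * (Emat J K)ᵀ * M * Z)⁻¹ =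
      ((Zred Z)ᵀ * Zred Z)⁻¹ * (Zred Z)ᵀ * (Cmat J K)ᵀ * PH * (Matrix.diagonal μ)⁻¹ *
        Cmat J K * (((Zred Z)ᵀ * Zred Z)⁻¹ * (Zred Z)ᵀ)ᵀ := by
  classical
  have hμ' : ∀ i, μ i ≠ 0 := fun i => (hμ i).ne'
  set E := Emat J K with hE_def
  set Dinv := Matrix.diagonal (fun i : Cell J K => (μ i)⁻¹) with hDinvE
  clear_value Dinv
  -- basic diagonal facts
  have hDt : (Matrix.diagonal μ)ᵀ = Matrix.diagonal μ := Matrix.diagonal_transpose μ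
  have hDinvt : Dinvᵀ = Dinv := by rw [hDinvE]; exact Matrix.diagonal_transpose _
  have hDDinv : Matrix.diagonal μ * Dinv = 1 := by
    rw [hDinvE, Matrix.diagonal_mul_diagonal,
      show (fun i => μ i * (μ i)⁻¹) = fun _ : Cell J K => (1:ℝ) from
        funext fun i => mul_inv_cancel₀ (hμ' i), Matrix.diagonal_one]
  have hDinvD : Dinv * Matrix.diagonal μ = 1 := by
    rw [hDinvE, Matrix.diagonal_mul_diagonal,
      show (fun i => (μ i)⁻¹ * μ i) = fun _ : Cell J K => (1:ℝ) from
        funext fun i => inv_mul_cancel₀ (hμ' i), Matrix.diagonal_one]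
  have hDinv_eq : (Matrix.diagonal μ)⁻¹ = Dinv := Matrix.inv_eq_right_inv hDDinv
  -- facts about M
  have hMt : Mᵀ = M := by
    rw [hM, Matrix.transpose_mul, Matrix.transpose_sub, Matrix.transpose_one, hDt,
      Matrix.sub_mul, Matrix.one_mul, projD_symm hμ hPR, Matrix.mul_sub, Matrix.mul_one]
  have hMrow : ∀ t ∈ rowSpace J K, M *ᵥ t = 0 := by
    intro t ht
    rw [hM, ← Matrix.mulVec_mulVec, Matrix.sub_mulVec, Matrix.one_mulVec,
      projD_fix hμ hPR ht, sub_self, Matrix.mulVec_zero]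
  have hMquad : ∀ x, x ⬝ᵥ M *ᵥ x = 0 → x ∈ rowSpace J K := by
    intro x hx
    apply projD_quad hμ hPR
    rw [← hx, hM, ← Matrix.mulVec_mulVec, Matrix.sub_mulVec, Matrix.one_mulVec]
  -- invertibility of EᵀME
  have hGE : IsUnit (Eᵀ * M * E) := by
    apply isUnit_of_mulVec_ker
    intro a h0
    have hq : (E *ᵥ a) ⬝ᵥ M *ᵥ (E *ᵥ a) = 0 := by
      rw [← dot_conj, h0, dotProduct_zero]
    exact Emul_rowSpace_eq_zero (hMquad _ hq)
  have hGEdet : IsUnit (Eᵀ * M * E).det := (Matrix.isUnit_iff_isUnit_det _).mp hGE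
  have hGEl : (Eᵀ * M * E)⁻¹ * (Eᵀ * M * E) = 1 := Matrix.nonsing_inv_mul _ hGEdet
  have hGEt : (Eᵀ * M * E)ᵀ = Eᵀ * M * E := by
    rw [Matrix.transpose_mul, Matrix.transpose_mul, Matrix.transpose_transpose, hMt,
      ← Matrix.mul_assoc]
  have hGEinvt : ((Eᵀ * M * E)⁻¹)ᵀ = (Eᵀ * M * E)⁻¹ := by
    rw [Matrix.transpose_nonsing_inv, hGEt]
  have hGEinvt2 : ((Eᵀ * (M * E))⁻¹)ᵀ = (Eᵀ * (M * E))⁻¹ := by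
    rw [← Matrix.mul_assoc]
    exact hGEinvt
  -- the matrix N
  set N := M - M * E * (Eᵀ * M * E)⁻¹ * Eᵀ * M with hN_def
  clear_value N
  have hNt : Nᵀ = N := by
    rw [hN_def, Matrix.transpose_sub, hMt]
    congr 1
    simp only [Matrix.transpose_mul, Matrix.transpose_transpose, hMt, hGEinvt, hGEinvt2,
      Matrix.mul_assoc]
  have hNE : N * E = 0 := by
    rw [hN_def, Matrix.sub_mul]
    rw [show M * E * (Eᵀ * M * E)⁻¹ * Eᵀ * M * E
        = M * E * ((Eᵀ * M * E)⁻¹ * (Eᵀ * M * E)) by simp only [Matrix.mul_assoc],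
      hGEl, Matrix.mul_one, sub_self]
  have hNmarg : ∀ t ∈ margSpace J K, N *ᵥ t = 0 := by
    intro t ht
    obtain ⟨rv, a, hrv, hta⟩ := marg_decomp ht
    have h1 : N *ᵥ rv = 0 := by
      rw [hN_def, Matrix.sub_mulVec, hMrow _ hrv,
        ← Matrix.mulVec_mulVec, hMrow _ hrv, Matrix.mulVec_zero, sub_self]
    have h2 : N *ᵥ (E *ᵥ a) = 0 := by
      rw [Matrix.mulVec_mulVec, hNE, Matrix.zero_mulVec]
    rw [hta, Matrix.mulVec_add, h1, h2, add_zero]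
  -- the projection onto the marginal space
  set PT := (1 : Matrix (Cell J K) (Cell J K) ℝ) - Dinv * N with hPT_def
  clear_value PT
  have hDinvN : Dinv * N = 1 - PT := by rw [hPT_def, sub_sub_cancel]
  have hDinvM : Dinv * M = 1 - PR := by
    rw [hM, ← Matrix.mul_assoc, hDinvD, Matrix.one_mul]
  have hxPT : ∀ x, x - PT *ᵥ x = Dinv *ᵥ (N *ᵥ x) := by
    intro x
    rw [hPT_def, Matrix.sub_mulVec, Matrix.one_mulVec, sub_sub_cancel, ← Matrix.mulVec_mulVec]
  have hPT : IsProjD (Matrix.diagonal μ) (margSpace J K) PT := by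
    intro x
    constructor
    · have hPTeq : PT = PR + (1 - PR) * (E * ((Eᵀ * M * E)⁻¹ * (Eᵀ * M))) := by
        rw [hPT_def, hN_def, Matrix.mul_sub, hDinvM]
        rw [show Dinv * (M * E * (Eᵀ * M * E)⁻¹ * Eᵀ * M)
            = (Dinv * M) * (E * ((Eᵀ * M * E)⁻¹ * (Eᵀ * M))) by simp only [Matrix.mul_assoc],
          hDinvM]
        abel
      rw [hPTeq, Matrix.add_mulVec, Matrix.sub_mul, Matrix.one_mul, Matrix.sub_mulVec]
      apply Submodule.add_mem
      · exact Submodule.mem_sup_left (hPR x).1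
      apply Submodule.sub_mem
      · rw [← Matrix.mulVec_mulVec]
        exact Submodule.mem_sup_right (Emul_mem_colSpace _)
      · rw [← Matrix.mulVec_mulVec]
        exact Submodule.mem_sup_left (hPR _).1
    · intro s hs
      rw [hxPT, hDinvE, dinv_dot hμ, dotProduct_comm, Matrix.dotProduct_mulVec,
        ← Matrix.mulVec_transpose, hNt, hNmarg _ hs, zero_dotProduct]
  have hPTidem : PT * PT = PT := projD_idem hμ hPT
  have hDPT : Matrix.diagonal μ * PT = Matrix.diagonal μ - N := by
    rw [hPT_def, Matrix.mul_sub, Matrix.mul_one, ← Matrix.mul_assoc, hDDinv, Matrix.one_mul]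
  have hNeq : N = Matrix.diagonal μ - Matrix.diagonal μ * PT := by
    rw [hDPT, sub_sub_cancel]
  have hNPT : N * PT = 0 := by
    rw [hNeq, Matrix.sub_mul, Matrix.mul_assoc, hPTidem, sub_self]
  have hNquad : ∀ x, x ⬝ᵥ N *ᵥ x = 0 → x ∈ margSpace J K := by
    intro x hx
    apply projD_quad hμ hPT
    rw [← hx]
    congr 1
    rw [hxPT x, Matrix.mulVec_mulVec, hDDinv, Matrix.one_mulVec]
  -- injectivity of Zred
  have hZredinj : ∀ a : Fin L → ℝ, Zred Z *ᵥ a = 0 → a = 0 := by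
    have hker : LinearMap.ker (Zred Z).mulVecLin = ⊥ := by
      have hsum := LinearMap.finrank_range_add_finrank_ker (Zred Z).mulVecLin
      rw [Module.finrank_fintype_fun_eq_card, Fintype.card_fin] at hsum
      have hrk : Module.finrank ℝ (LinearMap.range (Zred Z).mulVecLin) = L := hZrank
      rw [hrk] at hsum
      have h0 : Module.finrank ℝ (LinearMap.ker (Zred Z).mulVecLin) = 0 := by omega
      exact Submodule.finrank_eq_zero.mp h0
    intro a ha
    have hmem : a ∈ LinearMap.ker (Zred Z).mulVecLin := by
      rw [LinearMap.mem_ker, Matrix.mulVecLin_apply]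
      exact ha
    rw [hker] at hmem
    exact hmem
  -- S and its invertibility
  set S := Zᵀ * N * Z with hS_def
  clear_value S
  have hSexpr : Zᵀ * M * Z - Zᵀ * M * E * (Eᵀ * M * E)⁻¹ * Eᵀ * M * Z = S := by
    rw [hS_def, hN_def]
    simp only [Matrix.sub_mul, Matrix.mul_sub, Matrix.mul_assoc]
  have hZa_zero : ∀ a : Fin L → ℝ, Z *ᵥ a ∈ margSpace J K → Z *ᵥ a = 0 := by
    intro a hmem
    obtain ⟨r, c, hrc⟩ := mem_margSpace_repr hmem
    have hrow : ∀ j, (Z *ᵥ a) (j, 0) = 0 := by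
      intro j
      simp [Matrix.mulVec, dotProduct, hZrow j]
    have hcol : ∀ k, (Z *ᵥ a) (0, k) = 0 := by
      intro k
      simp [Matrix.mulVec, dotProduct, hZcol k]
    funext p
    have e1 : r p.1 + c 0 = 0 := by rw [← hrc (p.1, 0)]; exact hrow p.1
    have e2 : r 0 + c p.2 = 0 := by rw [← hrc (0, p.2)]; exact hcol p.2
    have e3 : r 0 + c 0 = 0 := by rw [← hrc (0, 0)]; exact hrow 0
    have := hrc p
    rw [Pi.zero_apply, this]
    linarith
  have hSunit : IsUnit S := by
    apply isUnit_of_mulVec_ker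
    intro a h0
    rw [hS_def] at h0
    have hq : (Z *ᵥ a) ⬝ᵥ N *ᵥ (Z *ᵥ a) = 0 := by
      rw [← dot_conj, h0, dotProduct_zero]
    have hZa := hZa_zero a (hNquad _ hq)
    apply hZredinj
    funext jk
    have : (Zred Z *ᵥ a) jk = (Z *ᵥ a) (jk.1.succ, jk.2.succ) := rfl
    rw [this, hZa, Pi.zero_apply, Pi.zero_apply]
  have hSdet : IsUnit S.det := (Matrix.isUnit_iff_isUnit_det _).mp hSunit
  have hSr : S * S⁻¹ = 1 := Matrix.mul_nonsing_inv _ hSdet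
  -- invertibility of Zredᵀ Zred
  have hGZ : IsUnit ((Zred Z)ᵀ * Zred Z) := by
    apply isUnit_of_mulVec_ker
    intro a h0
    have hq : (Zred Z *ᵥ a) ⬝ᵥ (Zred Z *ᵥ a) = 0 := by
      rw [Matrix.dotProduct_mulVec, ← Matrix.mulVec_transpose, Matrix.mulVec_mulVec, h0,
        zero_dotProduct]
    exact hZredinj a (dotProduct_self_eq_zero.mp hq)
  have hGZdet : IsUnit ((Zred Z)ᵀ * Zred Z).det := (Matrix.isUnit_iff_isUnit_det _).mp hGZ
  have hGZl : ((Zred Z)ᵀ * Zred Z)⁻¹ * ((Zred Z)ᵀ * Zred Z) = 1 := Matrix.nonsing_inv_mul _ hGZdet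
  have hGZr : ((Zred Z)ᵀ * Zred Z) * ((Zred Z)ᵀ * Zred Z)⁻¹ = 1 := Matrix.mul_nonsing_inv _ hGZdet
  have hGZt : ((Zred Z)ᵀ * Zred Z)ᵀ = (Zred Z)ᵀ * Zred Z := by
    rw [Matrix.transpose_mul, Matrix.transpose_transpose]
  -- V and Q
  set V := Z - PT * Z with hV_def
  clear_value V
  have hVeq : V = Dinv * (N * Z) := by
    rw [hV_def, ← Matrix.mul_assoc, hDinvN, Matrix.sub_mul, Matrix.one_mul]
  have hVtD : Vᵀ * Matrix.diagonal μ = Zᵀ * N := by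
    rw [hVeq, Matrix.transpose_mul, Matrix.transpose_mul, hNt, hDinvt, Matrix.mul_assoc,
      Matrix.mul_assoc, hDinvD, Matrix.mul_one]
  set Q := PT + V * (S⁻¹ * (Vᵀ * Matrix.diagonal μ)) with hQ_def
  clear_value Q
  have hQproj : IsProjD (Matrix.diagonal μ) (modelSpace Z) Q := by
    intro x
    constructor
    · rw [hQ_def, Matrix.add_mulVec]
      apply Submodule.add_mem
      · exact Submodule.mem_sup_left (hPT x).1
      · rw [← Matrix.mulVec_mulVec, hV_def, Matrix.sub_mulVec]
        apply Submodule.sub_mem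
        · exact Submodule.mem_sup_right (mem_colSpan_iff.mpr ⟨_, rfl⟩)
        · rw [← Matrix.mulVec_mulVec]
          exact Submodule.mem_sup_left (hPT _).1
    · intro s hs
      have hxQ : x - Q *ᵥ x
          = Dinv *ᵥ (N *ᵥ (x - Z *ᵥ ((S⁻¹ * (Vᵀ * Matrix.diagonal μ)) *ᵥ x))) := by
        rw [hQ_def, Matrix.add_mulVec,
          ← Matrix.mulVec_mulVec x V (S⁻¹ * (Vᵀ * Matrix.diagonal μ))]
        have h2 : V *ᵥ ((S⁻¹ * (Vᵀ * Matrix.diagonal μ)) *ᵥ x)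
            = Dinv *ᵥ (N *ᵥ (Z *ᵥ ((S⁻¹ * (Vᵀ * Matrix.diagonal μ)) *ᵥ x))) := by
          rw [hVeq, ← Matrix.mulVec_mulVec, ← Matrix.mulVec_mulVec]
        rw [Matrix.mulVec_sub, Matrix.mulVec_sub, ← hxPT x, ← h2]
        abel
      have hZtN : Zᵀ *ᵥ (N *ᵥ (x - Z *ᵥ ((S⁻¹ * (Vᵀ * Matrix.diagonal μ)) *ᵥ x))) = 0 := by
        have hexp : Zᵀ *ᵥ (N *ᵥ (x - Z *ᵥ ((S⁻¹ * (Vᵀ * Matrix.diagonal μ)) *ᵥ x)))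
            = (Zᵀ * N) *ᵥ x
              - (Zᵀ * N * Z) *ᵥ ((S⁻¹ * (Vᵀ * Matrix.diagonal μ)) *ᵥ x) := by
          rw [Matrix.mulVec_sub, Matrix.mulVec_sub, Matrix.mulVec_mulVec, Matrix.mulVec_mulVec,
            Matrix.mulVec_mulVec]
        rw [hexp, ← hS_def, Matrix.mulVec_mulVec, ← Matrix.mul_assoc, hSr, Matrix.one_mul,
          hVtD, sub_self]
      rw [hxQ, hDinvE, dinv_dot hμ]
      obtain ⟨t, htm, zb, hzb, rfl⟩ := Submodule.mem_sup.mp hs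
      obtain ⟨b, rfl⟩ := mem_colSpan_iff.mp hzb
      rw [dotProduct_add]
      have ht1 : (N *ᵥ (x - Z *ᵥ ((S⁻¹ * (Vᵀ * Matrix.diagonal μ)) *ᵥ x))) ⬝ᵥ t = 0 := by
        rw [dotProduct_comm, Matrix.dotProduct_mulVec, ← Matrix.mulVec_transpose, hNt,
          hNmarg _ htm, zero_dotProduct]
      have ht2 : (N *ᵥ (x - Z *ᵥ ((S⁻¹ * (Vᵀ * Matrix.diagonal μ)) *ᵥ x))) ⬝ᵥ (Z *ᵥ b) = 0 := by
        rw [Matrix.dotProduct_mulVec, ← Matrix.mulVec_transpose, hZtN, zero_dotProduct]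
      rw [ht1, ht2, add_zero]
  have hPHQ : PH = Q := projD_unique hμ hPH hQproj
  -- C-matrix computations
  have hCPT : (Cmat J K)ᵀ * PT = 0 := by
    apply ext_mulVec
    intro x
    rw [← Matrix.mulVec_mulVec, Ct_marg (hPT x).1, Matrix.zero_mulVec]
  have hCZ : (Cmat J K)ᵀ * Z = Zred Z := by
    ext jk l
    rw [Matrix.mul_apply]
    have hd : ∑ p, (Cmat J K)ᵀ jk p * Z p l = cVec jk.1 jk.2 ⬝ᵥ (fun p => Z p l) := rfl
    rw [hd, cVec_dot]
    have h00 : Z 0 = 0 := by rw [← Prod.mk_zero_zero]; exact hZrow 0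
    simp [Zred, hZrow, hZcol, h00]
  have hCV : (Cmat J K)ᵀ * V = Zred Z := by
    rw [hV_def, Matrix.mul_sub, hCZ, ← Matrix.mul_assoc, hCPT, Matrix.zero_mul, sub_zero]
  have hVtC : Vᵀ * Cmat J K = (Zred Z)ᵀ := by
    have h := congrArg Matrix.transpose hCV
    rwa [Matrix.transpose_mul, Matrix.transpose_transpose] at h
  -- conclusion
  refine ⟨hGE, ?_, ?_⟩
  · rw [hSexpr]
    exact hSunit
  · rw [hSexpr, hDinv_eq, hPHQ]
    have hT : (((Zred Z)ᵀ * Zred Z)⁻¹ * (Zred Z)ᵀ)ᵀ = Zred Z * ((Zred Z)ᵀ * Zred Z)⁻¹ := by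
      rw [Matrix.transpose_mul, Matrix.transpose_transpose, Matrix.transpose_nonsing_inv, hGZt]
    rw [hT]
    have hDDC : Matrix.diagonal μ * (Dinv * Cmat J K) = Cmat J K := by
      rw [← Matrix.mul_assoc, hDDinv, Matrix.one_mul]
    have key : (Cmat J K)ᵀ * Q * Dinv * Cmat J K = Zred Z * S⁻¹ * (Zred Z)ᵀ := by
      calc (Cmat J K)ᵀ * Q * Dinv * Cmat J K
          = ((Cmat J K)ᵀ * PT) * Dinv * Cmat J K
            + ((Cmat J K)ᵀ * (V * (S⁻¹ * (Vᵀ * Matrix.diagonal μ)))) * Dinv * Cmat J K := by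
            rw [hQ_def, Matrix.mul_add, Matrix.add_mul, Matrix.add_mul]
        _ = ((Cmat J K)ᵀ * (V * (S⁻¹ * (Vᵀ * Matrix.diagonal μ)))) * Dinv * Cmat J K := by
            rw [hCPT, Matrix.zero_mul, Matrix.zero_mul, zero_add]
        _ = (Cmat J K)ᵀ * V * (S⁻¹ * (Vᵀ * (Matrix.diagonal μ * (Dinv * Cmat J K)))) := by
            simp only [Matrix.mul_assoc]
        _ = (Cmat J K)ᵀ * V * (S⁻¹ * (Vᵀ * Cmat J K)) := by rw [hDDC]
        _ = Zred Z * (S⁻¹ * (Zred Z)ᵀ) := by rw [hCV, hVtC]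
        _ = Zred Z * S⁻¹ * (Zred Z)ᵀ := by rw [Matrix.mul_assoc]
    calc S⁻¹
        = (((Zred Z)ᵀ * Zred Z)⁻¹ * ((Zred Z)ᵀ * Zred Z)) * S⁻¹
          * (((Zred Z)ᵀ * Zred Z) * ((Zred Z)ᵀ * Zred Z)⁻¹) := by
          rw [hGZl, hGZr, Matrix.one_mul, Matrix.mul_one]
      _ = ((Zred Z)ᵀ * Zred Z)⁻¹ * (Zred Z)ᵀ * (Zred Z * S⁻¹ * (Zred Z)ᵀ)
          * (Zred Z * ((Zred Z)ᵀ * Zred Z)⁻¹) := by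
          simp only [Matrix.mul_assoc]
      _ = ((Zred Z)ᵀ * Zred Z)⁻¹ * (Zred Z)ᵀ * ((Cmat J K)ᵀ * Q * Dinv * Cmat J K)
          * (Zred Z * ((Zred Z)ᵀ * Zred Z)⁻¹) := by rw [key]
      _ = ((Zred Z)ᵀ * Zred Z)⁻¹ * (Zred Z)ᵀ * (Cmat J K)ᵀ * Q * Dinv * Cmat J K
          * (Zred Z * ((Zred Z)ᵀ * Zred Z)⁻¹) := by simp only [Matrix.mul_assoc]
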